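/- arXiv:1004.0261 — 11 statements merged into one kernel-verified Lean document; each statement's English description precedes it below -/
import Mathlib

section
/- If a, b, c are positive integers with a² + b² = c², then a² + c² is a congruent number, i.e., there exist positive rational numbers x, y, z with x² + y² = z² and x·y = 2·(a² + c²). -/
theorem stmt_4 (a b c : ℕ) (ha : 0 < a) (hb : 0 < b) (hc : 0 < c)
    (h : a^2 + b^2 = c^2) :
    ∃ x y z : ℚ, 0 < x ∧ 0 < y ∧ 0 < z ∧ x^2 + y^2 = z^2 ∧
      x * y = 2 * (a^2 + c^2) := by
  have hA : (0:ℚ) < a := by exact_mod_cast ha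
  have hB : (0:ℚ) < b := by exact_mod_cast hb
  have hC : (0:ℚ) < c := by exact_mod_cast hc
  have hq : (a:ℚ)^2 + (b:ℚ)^2 = (c:ℚ)^2 := by exact_mod_cast h
  refine ⟨2*a*c/b, b*((a:ℚ)^2+c^2)/(a*c), ((a:ℚ)^4+c^4)/(a*b*c), ?_, ?_, ?_, ?_, ?_⟩
  · positivity
  · positivity
  · positivity
  · have hA' : (a:ℚ) ≠ 0 := hA.ne'
    have hB' : (b:ℚ) ≠ 0 := hB.ne'
    have hC' : (c:ℚ) ≠ 0 := hC.ne'
    field_simp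
    linear_combination (((b:ℚ)^2+c^2-a^2)*((a:ℚ)^2+c^2)^2) * hq
  · field_simp
end

section
/- If a, b, c are positive integers with a² + b² = c² and b > a, then b² − a² is a congruent number, i.e., there exist positive rational numbers x, y, z with x² + y² = z² and x·y = 2·(b² − a²). -/
theorem stmt_5 (a b c : ℕ) (ha : 0 < a) (hb : 0 < b) (hc : 0 < c)
    (h : a^2 + b^2 = c^2) (hba : a < b) :
    ∃ x y z : ℚ, 0 < x ∧ 0 < y ∧ 0 < z ∧ x^2 + y^2 = z^2 ∧
      x * y = 2 * ((b:ℚ)^2 - (a:ℚ)^2) := by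
  set A : ℚ := (a : ℚ) with hA
  set B : ℚ := (b : ℚ) with hB
  set C : ℚ := (c : ℚ) with hC
  have hA0 : 0 < A := by rw [hA]; exact_mod_cast ha
  have hB0 : 0 < B := by rw [hB]; exact_mod_cast hb
  have hC0 : 0 < C := by rw [hC]; exact_mod_cast hc
  have hAB : A < B := by rw [hA, hB]; exact_mod_cast hba
  have hq : A ^ 2 + B ^ 2 = C ^ 2 := by rw [hA, hB, hC]; exact_mod_cast h
  have hn : 0 < B ^ 2 - A ^ 2 := by nlinarith
  refine ⟨C * (B ^ 2 - A ^ 2) / (A * B), 2 * A * B / C,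
    (C ^ 4 - 2 * A ^ 2 * B ^ 2) / (A * B * C), ?_, ?_, ?_, ?_, ?_⟩
  · positivity
  · positivity
  · have : 0 < C ^ 4 - 2 * A ^ 2 * B ^ 2 := by nlinarith
    positivity
  · field_simp
    linear_combination (C^4 * (A^2+B^2+C^2)) * hq
  · field_simp
end

section
/- For positive integers s > t, the number s⁴ − t⁴ is a congruent number: there exist positive rational numbers x, y, z with x² + y² = z² and x·y = 2·(s⁴ − t⁴). -/
theorem stmt_7 (s t : ℕ) (ht : 0 < t) (hst : t < s) :
    ∃ x y z : ℚ, 0 < x ∧ 0 < y ∧ 0 < z ∧ x^2 + y^2 = z^2 ∧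
      x * y = 2 * ((s:ℚ)^4 - (t:ℚ)^4) := by
  have hs : 0 < s := ht.trans hst
  have hsq : (0:ℚ) < s := by exact_mod_cast hs
  have htq : (0:ℚ) < t := by exact_mod_cast ht
  have hlt : (t:ℚ) < s := by exact_mod_cast hst
  have hdiff : (0:ℚ) < (s:ℚ)^4 - (t:ℚ)^4 := by
    have h4 : (t:ℚ)^4 < (s:ℚ)^4 := by
      exact pow_lt_pow_left₀ hlt htq.le (by norm_num)
    linarith
  have hst0 : (0:ℚ) < (s:ℚ) * t := by positivity
  refine ⟨((s:ℚ)^4 - t^4) / (s*t), 2*s*t, ((s:ℚ)^4 + t^4) / (s*t), ?_, ?_, ?_, ?_, ?_⟩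
  · positivity
  · positivity
  · positivity
  · field_simp
    ring
  · field_simp
end

section
/- For positive integers s > t, the number 2·(s⁴ + t⁴) is a congruent number: there exist positive rational numbers x, y, z with x² + y² = z² and x·y = 4·(s⁴ + t⁴). -/
theorem stmt_8 (s t : ℕ) (ht : 0 < t) (hst : t < s) :
    ∃ x y z : ℚ, 0 < x ∧ 0 < y ∧ 0 < z ∧ x^2 + y^2 = z^2 ∧
      x * y = 4 * ((s:ℚ)^4 + (t:ℚ)^4) := by
  set S : ℚ := (s:ℚ) with hS
  set T : ℚ := (t:ℚ) with hT
  have hT0 : 0 < T := by rw [hT]; exact_mod_cast ht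
  have hTS : T < S := by rw [hT, hS]; exact_mod_cast hst
  have hS0 : 0 < S := lt_trans hT0 hTS
  have hd : 0 < S^4 - T^4 := by
    have h4 : T^4 < S^4 := pow_lt_pow_left₀ hTS hT0.le (by norm_num)
    linarith
  have hdne : S^4 - T^4 ≠ 0 := ne_of_gt hd
  have hSne : S ≠ 0 := ne_of_gt hS0
  have hTne : T ≠ 0 := ne_of_gt hT0
  refine ⟨(S^4 - T^4) / (S*T), 4*S*T*(S^4+T^4) / (S^4 - T^4),
    ((S^4+T^4)^2 + 4*S^4*T^4) / (S*T*(S^4-T^4)), ?_, ?_, ?_, ?_, ?_⟩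
  · positivity
  · positivity
  · positivity
  · field_simp
    ring
  · field_simp
end

section
/- For positive integers s > t, the number s⁴ + t⁴ + 6·s²·t² is a congruent number: there exist positive rational numbers x, y, z with x² + y² = z² and x·y = 2·(s⁴ + t⁴ + 6·s²·t²). -/
theorem stmt_9 (s t : ℕ) (ht : 0 < t) (hst : t < s) :
    ∃ x y z : ℚ, 0 < x ∧ 0 < y ∧ 0 < z ∧ x^2 + y^2 = z^2 ∧
      x * y = 2 * ((s:ℚ)^4 + (t:ℚ)^4 + 6 * (s:ℚ)^2 * (t:ℚ)^2) := by
  have ha : (0:ℚ) < (t:ℚ) := by exact_mod_cast ht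
  have hb : (t:ℚ) < (s:ℚ) := by exact_mod_cast hst
  have hs : (0:ℚ) < (s:ℚ) := lt_trans ha hb
  set a : ℚ := (s:ℚ)
  set b : ℚ := (t:ℚ)
  have hA : (0:ℚ) < a^2 + b^2 := by positivity
  have hB : (0:ℚ) < 2*a*b := by positivity
  have hC : (0:ℚ) < a^2 - b^2 := by nlinarith
  have hn : (0:ℚ) < a^4 + b^4 + 6*a^2*b^2 := by positivity
  refine ⟨2*(a^2+b^2)*(2*a*b)/(a^2-b^2),
    (a^4 + b^4 + 6*a^2*b^2)*(a^2-b^2)/((a^2+b^2)*(2*a*b)),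
    ((a^2+b^2)^4 + (2*a*b)^4)/((a^2+b^2)*(2*a*b)*(a^2-b^2)), ?_, ?_, ?_, ?_, ?_⟩
  · positivity
  · positivity
  · positivity
  · field_simp
    ring
  · field_simp
end

section
/- For positive integers s > t of opposite parity, the number s·t·(s² + t²)/2 is a congruent number: there exist positive rational numbers x, y, z with x² + y² = z² and x·y = s·t·(s² + t²). -/
theorem stmt_10 (s t : ℕ) (ht : 0 < t) (hst : t < s) (hpar : Odd (s + t)) :
    ∃ x y z : ℚ, 0 < x ∧ 0 < y ∧ 0 < z ∧ x^2 + y^2 = z^2 ∧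
      x * y = (s : ℚ) * t * ((s:ℚ)^2 + (t:ℚ)^2) := by
  have ht' : (0:ℚ) < t := by exact_mod_cast ht
  have hlt : (t:ℚ) < (s:ℚ) := by exact_mod_cast hst
  have hs' : (0:ℚ) < s := lt_trans ht' hlt
  have hd : (0:ℚ) < (s:ℚ)^2 - (t:ℚ)^2 := by nlinarith
  refine ⟨2*s*t*((s:ℚ)^2+(t:ℚ)^2)/((s:ℚ)^2-(t:ℚ)^2), ((s:ℚ)^2-(t:ℚ)^2)/2,
    (((s:ℚ)+t)^4+((s:ℚ)-t)^4)/(4*((s:ℚ)^2-(t:ℚ)^2)), ?_, ?_, ?_, ?_, ?_⟩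
  · apply div_pos _ hd; positivity
  · positivity
  · apply div_pos _ (by positivity)
    positivity
  · field_simp
    ring
  · field_simp
end

section
/- For every positive integer k, the number k·(k+1)·(2k+1) is a congruent number: there exist positive rational numbers x, y, z with x² + y² = z² and x·y = 2·k·(k+1)·(2k+1). -/
theorem stmt_13 (k : ℕ) (hk : 0 < k) :
    ∃ x y z : ℚ, 0 < x ∧ 0 < y ∧ 0 < z ∧ x^2 + y^2 = z^2 ∧
      x * y = 2 * (k * (k + 1) * (2 * k + 1)) := by
  refine ⟨2 * k * (k + 1), 2 * k + 1, 2 * k^2 + 2 * k + 1, ?_, ?_, ?_, ?_, ?_⟩ <;>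
    push_cast <;> [positivity; positivity; positivity; ring; ring]
end

section
/- For every positive integer k, the number (2k+1)·(2k² + 2k + 1) is a congruent number: there exist positive rational numbers x, y, z with x² + y² = z² and x·y = 2·(2k+1)·(2k² + 2k + 1). -/
theorem stmt_14 (k : ℕ) (hk : 0 < k) :
    ∃ x y z : ℚ, 0 < x ∧ 0 < y ∧ 0 < z ∧ x^2 + y^2 = z^2 ∧
      x * y = 2 * ((2 * k + 1) * (2 * (k:ℚ)^2 + 2 * k + 1)) := by
  have hk' : (1:ℚ) ≤ (k:ℚ) := by exact_mod_cast hk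
  set q : ℚ := (k:ℚ) with hq
  have hq0 : 0 < q := by linarith
  have hb : (0:ℚ) < 2*q^2 + 2*q := by positivity
  have hbne : (2*q^2 + 2*q) ≠ 0 := ne_of_gt hb
  refine ⟨2*(2*q+1)*(2*q^2+2*q+1)/(2*q^2+2*q), 2*q^2+2*q,
    ((2*q+1)^2 + (2*q^2+2*q+1)^2)/(2*q^2+2*q), ?_, ?_, ?_, ?_, ?_⟩
  · positivity
  · exact hb
  · positivity
  · field_simp
    ring
  · field_simp
end

section
/- For every positive integer k, the number k·(4k² + 1) is a congruent number: there exist positive rational numbers x, y, z with x² + y² = z² and x·y = 2·k·(4k² + 1). -/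
theorem stmt_15 (k : ℕ) (hk : 0 < k) :
    ∃ x y z : ℚ, 0 < x ∧ 0 < y ∧ 0 < z ∧ x^2 + y^2 = z^2 ∧
      x * y = 2 * (k * (4 * (k:ℚ)^2 + 1)) := by
  have hK : (1:ℚ) ≤ (k:ℚ) := by exact_mod_cast hk
  set K : ℚ := (k:ℚ) with hKdef
  have h1 : 0 < 4*K^2 - 1 := by nlinarith
  have hK0 : 0 < K := by linarith
  refine ⟨(4*K^2-1)/2, 4*K*(4*K^2+1)/(4*K^2-1),
    (16*K^4+24*K^2+1)/(2*(4*K^2-1)), ?_, ?_, ?_, ?_, ?_⟩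
  · positivity
  · apply div_pos _ h1; nlinarith
  · apply div_pos _ (by linarith); nlinarith
  · have h1' : (4*K^2 - 1) ≠ 0 := ne_of_gt h1
    field_simp
    ring
  · have h1' : (4*K^2 - 1) ≠ 0 := ne_of_gt h1
    field_simp
    ring
end

section
/- Let d be a positive integer and suppose x, y are positive integers with x ≥ 2 satisfying the Pell equation x² − d·y² = 1. Then x·d is a congruent number: there exist positive rational numbers a, b, c with a² + b² = c² and a·b = 2·x·d. -/
theorem stmt_17 (d x y : ℤ) (hd : 0 < d) (hx : 2 ≤ x) (hy : 0 < y)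
    (hpell : x^2 - d * y^2 = 1) :
    ∃ a b c : ℚ, 0 < a ∧ 0 < b ∧ 0 < c ∧ a^2 + b^2 = c^2 ∧
      a * b = 2 * (x * d) := by
  have hyQ : (0:ℚ) < (y:ℚ) := by exact_mod_cast hy
  have hxQ : (0:ℚ) < (x:ℚ) := by exact_mod_cast lt_of_lt_of_le (by norm_num) hx
  have hdQ : (0:ℚ) < (d:ℚ) := by exact_mod_cast hd
  have hy0 : (y:ℚ) ≠ 0 := ne_of_gt hyQ
  have hp : (x:ℚ)^2 - (d:ℚ) * (y:ℚ)^2 = 1 := by exact_mod_cast hpell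
  refine ⟨(d:ℚ) * y, 2 * x / y, ((x:ℚ)^2 + 1) / y, by positivity, by positivity,
    by positivity, ?_, ?_⟩
  · field_simp
    nlinarith [hp, sq_nonneg ((x:ℚ)*y)]
  · have : (d:ℚ) * (y:ℚ)^2 = (x:ℚ)^2 - 1 := by linarith
    field_simp
end

section
/- If x, y are positive integers satisfying x² − 2·y² = 1 with y ≠ 0, then y² + 1 is a congruent number: there exist positive rational numbers a, b, c with a² + b² = c² and a·b = 2·(y² + 1). -/
theorem stmt_19 (x y : ℤ) (hx : 0 < x) (hy : 0 < y)
    (hpell : x^2 - 2 * y^2 = 1) (hyne : y ≠ 0) :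
    ∃ a b c : ℚ, 0 < a ∧ 0 < b ∧ 0 < c ∧ a^2 + b^2 = c^2 ∧
      a * b = 2 * ((y:ℚ)^2 + 1) := by
  have hx' : (0:ℚ) < (x:ℚ) := by exact_mod_cast hx
  have hy' : (0:ℚ) < (y:ℚ) := by exact_mod_cast hy
  have hp : (x:ℚ)^2 = 2*(y:ℚ)^2 + 1 := by
    have : ((x^2 - 2*y^2 : ℤ) : ℚ) = 1 := by exact_mod_cast congrArg (Int.cast : ℤ → ℚ) hpell
    push_cast at this
    linarith
  refine ⟨2*(y:ℚ)*((y:ℚ)^2+1)/(x:ℚ), (x:ℚ)/(y:ℚ), ((x:ℚ)^4+1)/(2*(x:ℚ)*(y:ℚ)),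
    by positivity, by positivity, by positivity, ?_, ?_⟩
  · field_simp
    linear_combination (-((x:ℚ)^2+2*(y:ℚ)^2+1)*
      (4*(y:ℚ)^2*((y:ℚ)^2+1)+(x:ℚ)^4-1))*hp
  · field_simp
end
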